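/- In the theory of the random graph: if μ < λ ≤ 2^μ, M is a λ⁺-saturated model of the random graph and A ⊆ M has |A| ≤ λ, then there exists B ⊆ M with |B| = μ such that every nonalgebraic complete type over A is finitely realized in B, i.e., every finite subset of such a type has a realization in B. -/
import Mathlib


universe u

/-- In the theory of the random graph: if `μ < λ ≤ 2^μ` (infinite cardinals), `M` is a
`λ⁺`-saturated model of the random graph (by quantifier elimination, `λ⁺`-saturation
for a graph `G` means: for any disjoint sets `S, T` of vertices with `|S ∪ T| ≤ λ`
there is a vertex outside `S ∪ T` adjacent to everything in `S` and nothing in `T`),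
and `A` is a set of vertices with `|A| ≤ λ`, then there is a set `B` of vertices with
`|B| = μ` such that every nonalgebraic complete type over `A` (determined, by
quantifier elimination, by a function `p : A → Bool` recording which of `xRa`/`¬xRa`
holds) is finitely realized in `B`: every finite subset of the type has a realization
in `B`. -/
theorem random_graph_types_finitely_realized {V : Type u} (G : SimpleGraph V)
    (μ lam : Cardinal.{u}) (hμ : Cardinal.aleph0 ≤ μ) (h1 : μ < lam)
    (h2 : lam ≤ 2 ^ μ)
    (hsat : ∀ S T : Set V, Disjoint S T → Cardinal.mk ↥(S ∪ T) ≤ lam →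
      ∃ v : V, v ∉ S ∪ T ∧ (∀ s ∈ S, G.Adj v s) ∧ ∀ t ∈ T, ¬ G.Adj v t)
    (A : Set V) (hA : Cardinal.mk A ≤ lam) :
    ∃ B : Set V, Cardinal.mk B = μ ∧
      ∀ p : A → Bool, ∀ F : Finset A, ∃ b ∈ B, ∀ a ∈ F,
        b ≠ (a : V) ∧ (G.Adj b (a : V) ↔ p a = true) := by
  classical
  obtain ⟨κ, hκ⟩ : ∃ κ : Type u, Cardinal.mk κ = μ := ⟨μ.out, Cardinal.mk_out μ⟩
  have hκinf : Infinite κ := by rw [Cardinal.infinite_iff, hκ]; exact hμ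
  -- embed A into κ → Bool
  have hAle : Cardinal.mk A ≤ Cardinal.mk (κ → Bool) := by
    have : Cardinal.mk (κ → Bool) = 2 ^ μ := by
      simp [Cardinal.mk_arrow, hκ, Cardinal.mk_bool]
    rw [this]
    exact hA.trans h2
  obtain ⟨e⟩ := (Cardinal.le_def _ _).mp hAle
  set I := Σ E : Finset κ, (({x // x ∈ E} → Bool) → Bool) with hI
  set d : I → A → Bool := fun i a => i.2 (fun x => e a x.1) with hd
  -- for each index, a realizing vertex
  have hex : ∀ i : I, ∃ v : V, v ∉ A ∧ ∀ a : A, G.Adj v ↑a ↔ d i a = true := by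
    intro i
    have hdisj : Disjoint (Subtype.val '' {a : A | d i a = true})
        (Subtype.val '' {a : A | d i a = false}) := by
      rw [Set.disjoint_image_iff Subtype.val_injective, Set.disjoint_left]
      intro a h1 h2
      simp only [Set.mem_setOf_eq] at h1 h2
      rw [h1] at h2; exact Bool.noConfusion h2
    have hunion : Subtype.val '' {a : A | d i a = true} ∪
        Subtype.val '' {a : A | d i a = false} = A := by
      rw [← Set.image_union]
      have : {a : A | d i a = true} ∪ {a : A | d i a = false} = Set.univ := by
        ext a; simp [Bool.eq_false_or_eq_true (d i a)]
      rw [this, Set.image_univ, Subtype.range_coe]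
    obtain ⟨v, hv, hS, hT⟩ := hsat _ _ hdisj (by rw [hunion]; exact hA)
    refine ⟨v, by rwa [hunion] at hv, fun a => ?_⟩
    constructor
    · intro hadj
      cases hb : d i a with
      | false => exact absurd hadj (hT _ ⟨a, hb, rfl⟩)
      | true => rfl
    · intro hb
      exact hS _ ⟨a, hb, rfl⟩
  choose b hbA hbAdj using hex
  -- cardinality of I
  have hIcard : Cardinal.mk I ≤ μ := by
    calc Cardinal.mk I = Cardinal.sum (fun E : Finset κ =>
          Cardinal.mk (({x // x ∈ E} → Bool) → Bool)) := Cardinal.mk_sigma _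
      _ ≤ Cardinal.sum (fun _ : Finset κ => Cardinal.aleph0) :=
          Cardinal.sum_le_sum _ _ (fun E => Cardinal.mk_le_aleph0)
      _ = Cardinal.mk (Finset κ) * Cardinal.aleph0 := Cardinal.sum_const' _ _
      _ = μ * Cardinal.aleph0 := by rw [Cardinal.mk_finset_of_infinite, hκ]
      _ = μ := Cardinal.mul_eq_left hμ hμ Cardinal.aleph0_ne_zero
  -- V is big
  have hVbig : μ ≤ Cardinal.mk V := by
    by_contra hlt
    push_neg at hlt
    obtain ⟨v, hv, -, -⟩ := hsat ∅ Set.univ (by simp)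
      (by simpa using ((hlt.trans h1).le))
    simp at hv
  obtain ⟨C, hC⟩ := Cardinal.le_mk_iff_exists_set.mp hVbig
  refine ⟨Set.range b ∪ C, ?_, ?_⟩
  · apply le_antisymm
    · calc Cardinal.mk ↥(Set.range b ∪ C) ≤
            Cardinal.mk ↥(Set.range b) + Cardinal.mk ↥C := Cardinal.mk_union_le _ _
        _ ≤ μ + μ := add_le_add (Cardinal.mk_range_le.trans hIcard) hC.le
        _ = μ := Cardinal.add_eq_self hμ
    · rw [← hC]; exact Cardinal.mk_le_mk_of_subset Set.subset_union_right
  · intro p F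
    have hne : Nonempty κ := inferInstance
    -- separating coordinates
    set sep : A → A → κ := fun a a' =>
      if h : e a = e a' then Classical.arbitrary κ
      else (Function.ne_iff.mp h).choose with hsep
    have hsepspec : ∀ a a' : A, e a ≠ e a' →
        e a (sep a a') ≠ e a' (sep a a') := by
      intro a a' h
      simp only [hsep, dif_neg h]
      exact (Function.ne_iff.mp h).choose_spec
    set E : Finset κ := F.biUnion (fun a => F.image (sep a)) with hE
    have hsepE : ∀ a ∈ F, ∀ a' ∈ F, sep a a' ∈ E := by
      intro a ha a' ha'
      rw [hE]
      exact Finset.mem_biUnion.mpr ⟨a, ha, Finset.mem_image_of_mem _ ha'⟩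
    -- separation: equal restrictions on E force equality
    have hsepinj : ∀ a ∈ F, ∀ a' ∈ F,
        (fun x : {x // x ∈ E} => e a x.1) = (fun x : {x // x ∈ E} => e a' x.1) →
        a = a' := by
      intro a ha a' ha' hfa
      by_contra hne'
      have heq : e a ≠ e a' := fun h => hne' (e.injective h)
      have hx := hsepspec a a' heq
      have := congrFun hfa ⟨sep a a', hsepE a ha a' ha'⟩
      exact hx this
    set φ : ({x // x ∈ E} → Bool) → Bool := fun g =>
      if h : ∃ a : A, a ∈ F ∧ (fun x : {x // x ∈ E} => e a x.1) = g
      then p h.choose else false with hφ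
    set i : I := ⟨E, φ⟩ with hi
    have hdip : ∀ a ∈ F, d i a = p a := by
      intro a ha
      have hex' : ∃ a' : A, a' ∈ F ∧
          (fun x : {x // x ∈ E} => e a' x.1) = (fun x : {x // x ∈ E} => e a x.1) :=
        ⟨a, ha, rfl⟩
      have : d i a = φ (fun x : {x // x ∈ E} => e a x.1) := rfl
      rw [this, hφ]
      simp only [dif_pos hex']
      obtain ⟨ha'F, ha'eq⟩ := hex'.choose_spec
      rw [hsepinj _ ha'F _ ha ha'eq]
    refine ⟨b i, Set.mem_union_left _ ⟨i, rfl⟩, fun a ha => ?_⟩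
    constructor
    · intro h; exact hbA i (h ▸ a.2)
    · rw [hbAdj i a, hdip a ha]
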